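/- Let A = R(σ,f) be a simple GWA satisfying the standing hypotheses and α a root of f with multiplicity n_α. There is a short exact sequence of graded right A-modules 0 → (z−α)^{n_α}A + xA → A ⊕ A⟨−1⟩ → [σ⁻¹((z−α)^{n_α})A + yA]⟨−1⟩ → 0, and this sequence splits; hence M_α^{-n_α} = A/((z−α)^{n_α}A + xA) has projective dimension 1. -/

import Mathlib

/- The generalized Weyl algebra `A = R(σ, f)`: the quotient of the free algebra on
generators `{x, y} ∪ R` by the relations making `R → A` a `k`-algebra map together with
`xy = f`, `yx = σ⁻¹(f)`, `xr = σ(r)x`, `yr = σ⁻¹(r)y` for all `r ∈ R`. -/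

/-- Generators of the GWA: the elements of `R`, and `x`, `y`. -/
inductive GWAgen (R : Type) : Type
  | r (a : R) : GWAgen R
  | x : GWAgen R
  | y : GWAgen R

open FreeAlgebra in
/-- The defining relations of the generalized Weyl algebra `R(σ, f)`. -/
inductive GWArel (k : Type) [CommRing k] (R : Type) [CommRing R] [Algebra k R]
    (σ : R ≃ₐ[k] R) (f : R) :
    FreeAlgebra k (GWAgen R) → FreeAlgebra k (GWAgen R) → Prop
  | add (a b : R) : GWArel k R σ f (ι k (.r (a + b))) (ι k (.r a) + ι k (.r b))
  | mul (a b : R) : GWArel k R σ f (ι k (.r (a * b))) (ι k (.r a) * ι k (.r b))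
  | alg (c : k) : GWArel k R σ f (ι k (.r (algebraMap k R c))) (algebraMap k _ c)
  | xy : GWArel k R σ f (ι k .x * ι k .y) (ι k (.r f))
  | yx : GWArel k R σ f (ι k .y * ι k .x) (ι k (.r (σ.symm f)))
  | xr (a : R) : GWArel k R σ f (ι k .x * ι k (.r a)) (ι k (.r (σ a)) * ι k .x)
  | yr (a : R) : GWArel k R σ f (ι k .y * ι k (.r a)) (ι k (.r (σ.symm a)) * ι k .y)

/-- The generalized Weyl algebra `A = R(σ, f)`. -/
abbrev GWA (k : Type) [CommRing k] (R : Type) [CommRing R] [Algebra k R]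
    (σ : R ≃ₐ[k] R) (f : R) : Type :=
  RingQuot (GWArel k R σ f)

namespace GWA

variable (k : Type) [CommRing k] (R : Type) [CommRing R] [Algebra k R]
  (σ : R ≃ₐ[k] R) (f : R)

/-- The element `x` of the GWA. -/
noncomputable def X : GWA k R σ f :=
  RingQuot.mkAlgHom k (GWArel k R σ f) (FreeAlgebra.ι k .x)

/-- The element `y` of the GWA. -/
noncomputable def Y : GWA k R σ f :=
  RingQuot.mkAlgHom k (GWArel k R σ f) (FreeAlgebra.ι k .y)

/-- The image in the GWA of an element `a` of the base ring `R`. -/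
noncomputable def r (a : R) : GWA k R σ f :=
  RingQuot.mkAlgHom k (GWArel k R σ f) (FreeAlgebra.ι k (.r a))

end GWA

open Polynomial

/-- The GWA `A = k[z](σ, f)` with base ring `R = k[z]` and `σ(z) = z + 1`
(Hypothesis 2.1(1)). -/
noncomputable abbrev GWAk (k : Type) [Field k] (f : k[X]) : Type :=
  GWA k k[X] (algEquivAevalXAddC (1 : k)) f

/-- The graded right ideal `(z − α)^j A + xA` of `A`, viewed as a submodule of `A` over
the opposite ring `Aᵐᵒᵖ`. -/
noncomputable def rightIdealM (k : Type) [Field k] (f : k[X]) (α : k) (j : ℕ) :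
    Submodule (GWAk k f)ᵐᵒᵖ (GWAk k f) :=
  Submodule.span (GWAk k f)ᵐᵒᵖ
    {GWA.r k k[X] (algEquivAevalXAddC (1 : k)) f ((X - C α) ^ j),
      GWA.X k k[X] (algEquivAevalXAddC (1 : k)) f}

/-- The graded right `A`-module `M_α^{−j} = A/((z − α)^j A + xA)`. -/
noncomputable abbrev Mminus (k : Type) [Field k] (f : k[X]) (α : k) (j : ℕ) : Type :=
  GWAk k f ⧸ rightIdealM k f α j

/-- The right ideal `σ⁻¹((z−α)^{n_α})A + yA` of `A`. -/
noncomputable def rightIdealK (k : Type) [Field k] (f : k[X]) (α : k) (m : ℕ) :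
    Submodule (GWAk k f)ᵐᵒᵖ (GWAk k f) :=
  Submodule.span (GWAk k f)ᵐᵒᵖ
    {GWA.r k k[X] (algEquivAevalXAddC (1 : k)) f
        ((algEquivAevalXAddC (1 : k)).symm ((X - C α) ^ m)),
      GWA.Y k k[X] (algEquivAevalXAddC (1 : k)) f}
namespace GWAaux
open Polynomial

variable {k : Type} [Field k]

/-- The shift automorphism `p(X) ↦ p(X + m)`. -/
noncomputable def τ (m : ℤ) : k[X] ≃ₐ[k] k[X] := algEquivAevalXAddC (m : k)

lemma τ_τ (m n : ℤ) (p : k[X]) : τ m (τ n p) = τ (m + n) p := by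
  simp only [τ, algEquivAevalXAddC_apply, ← Polynomial.comp_eq_aeval]
  rw [Polynomial.comp_assoc]
  congr 1
  push_cast
  simp [Polynomial.X_comp, Polynomial.add_comp, Polynomial.C_comp, C_add]
  ring

@[simp] lemma τ_zero (p : k[X]) : τ 0 p = p := by
  simp [τ, algEquivAevalXAddC_apply]

lemma τ_one_apply (p : k[X]) : τ 1 p = aeval (X + 1) p := by
  simp [τ, algEquivAevalXAddC_apply]

lemma τ_negone_apply (p : k[X]) : τ (-1) p = aeval (X + -1) p := by
  simp [τ, algEquivAevalXAddC_apply]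

lemma σ_eq_τ (p : k[X]) : algEquivAevalXAddC (1 : k) p = τ 1 p := by
  simp [τ]

lemma σ_symm_eq_τ (p : k[X]) : (algEquivAevalXAddC (1 : k)).symm p = τ (-1) p := by
  rw [algEquivAevalXAddC_symm]
  simp [τ]

variable (k) in
/-- shorthand for the fixed automorphism. -/
noncomputable abbrev σA : k[X] ≃ₐ[k] k[X] := algEquivAevalXAddC (1 : k)

variable (f : k[X])

local notation "A" => GWAk k f

/-- `r` as elements of `A`. -/
noncomputable def ra (p : k[X]) : A := GWA.r k k[X] (σA k) f p
noncomputable def Xg : A := GWA.X k k[X] (σA k) f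
noncomputable def Yg : A := GWA.Y k k[X] (σA k) f

open RingQuot in
lemma ra_add (p q : k[X]) : ra f (p + q) = ra f p + ra f q := by
  have := mkAlgHom_rel k (GWArel.add (k := k) (σ := σA k) (f := f) p q)
  simpa [ra, GWA.r, map_add] using this

open RingQuot in
lemma ra_mul (p q : k[X]) : ra f (p * q) = ra f p * ra f q := by
  have := mkAlgHom_rel k (GWArel.mul (k := k) (σ := σA k) (f := f) p q)
  simpa [ra, GWA.r, map_mul] using this

open RingQuot in
lemma ra_algebraMap (c : k) : ra f (algebraMap k k[X] c) = algebraMap k A c := by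
  have := mkAlgHom_rel k (GWArel.alg (k := k) (σ := σA k) (f := f) c)
  simpa [ra, GWA.r, AlgHom.commutes] using this

lemma ra_one : ra f 1 = 1 := by
  simpa using ra_algebraMap f 1

lemma ra_smul (c : k) (p : k[X]) : ra f (c • p) = c • ra f p := by
  rw [Algebra.smul_def, ra_mul, ra_algebraMap, ← Algebra.smul_def]

open RingQuot in
lemma Xg_mul_ra (p : k[X]) : Xg f * ra f p = ra f (τ 1 p) * Xg f := by
  have := mkAlgHom_rel k (GWArel.xr (k := k) (σ := σA k) (f := f) p)
  simpa [ra, Xg, GWA.r, GWA.X, map_mul, τ_one_apply] using this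

open RingQuot in
lemma Yg_mul_ra (p : k[X]) : Yg f * ra f p = ra f (τ (-1) p) * Yg f := by
  have := mkAlgHom_rel k (GWArel.yr (k := k) (σ := σA k) (f := f) p)
  simpa [ra, Yg, GWA.r, GWA.Y, map_mul, τ_negone_apply] using this

open RingQuot in
lemma Xg_mul_Yg : Xg f * Yg f = ra f f := by
  have := mkAlgHom_rel k (GWArel.xy (k := k) (σ := σA k) (f := f))
  simpa [ra, Xg, Yg, GWA.r, GWA.X, GWA.Y, map_mul] using this

open RingQuot in
lemma Yg_mul_Xg : Yg f * Xg f = ra f (τ (-1) f) := by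
  have := mkAlgHom_rel k (GWArel.yx (k := k) (σ := σA k) (f := f))
  simpa [ra, Xg, Yg, GWA.r, GWA.X, GWA.Y, map_mul, τ_negone_apply] using this

end GWAaux
namespace GWAaux
open Polynomial Finsupp

variable {k : Type} [Field k]

/-- The module `W = ⊕_{m ∈ ℤ} k[X] e_m` on which `A` acts. -/
abbrev W (k : Type) [Field k] : Type := ℤ →₀ k[X]

/-- action of `r p` : `e_m ↦ τ(-m)(p) e_m`. -/
noncomputable def Dr (p : k[X]) : W k →ₗ[k] W k :=
  Finsupp.lsum k (fun m => (Finsupp.lsingle m).comp (LinearMap.mulLeft k (τ (-m) p)))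

/-- action of `x` : `e_m ↦ e_{m+1}`. -/
noncomputable def Lx : W k →ₗ[k] W k :=
  Finsupp.lsum k (fun m => Finsupp.lsingle (m + 1))

variable (f : k[X])

/-- action of `y` : `e_m ↦ τ(-m)(f) e_{m-1}`. -/
noncomputable def Ly : W k →ₗ[k] W k :=
  Finsupp.lsum k (fun m => (Finsupp.lsingle (m - 1)).comp (LinearMap.mulLeft k (τ (-m) f)))

lemma Dr_single (p q : k[X]) (m : ℤ) :
    Dr p (Finsupp.single m q) = Finsupp.single m (τ (-m) p * q) := by
  simp only [Dr, Finsupp.lsum_single, LinearMap.coe_comp, Function.comp_apply,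
    LinearMap.mulLeft_apply, Finsupp.lsingle_apply]

lemma Lx_single (q : k[X]) (m : ℤ) :
    Lx (Finsupp.single m q) = Finsupp.single (m + 1) q := by
  simp only [Lx, Finsupp.lsum_single, Finsupp.lsingle_apply]

lemma Ly_single (q : k[X]) (m : ℤ) :
    Ly f (Finsupp.single m q) = Finsupp.single (m - 1) (τ (-m) f * q) := by
  simp only [Ly, Finsupp.lsum_single, LinearMap.coe_comp, Function.comp_apply,
    LinearMap.mulLeft_apply, Finsupp.lsingle_apply]

/-- The representation on the free algebra. -/
noncomputable def ρ0 : FreeAlgebra k (GWAgen k[X]) →ₐ[k] Module.End k (W k) :=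
  FreeAlgebra.lift k (fun g => match g with
    | .r p => Dr p
    | .x => Lx
    | .y => Ly f)

@[simp] lemma ρ0_r (p : k[X]) : ρ0 f (FreeAlgebra.ι k (.r p)) = Dr p := by
  simp [ρ0]
@[simp] lemma ρ0_x : ρ0 f (FreeAlgebra.ι k .x) = Lx := by simp [ρ0]
@[simp] lemma ρ0_y : ρ0 f (FreeAlgebra.ι k .y) = Ly f := by simp [ρ0]

lemma ρ0_rel : ∀ ⦃u v : FreeAlgebra k (GWAgen k[X])⦄,
    GWArel k k[X] (σA k) f u v → ρ0 f u = ρ0 f v := by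
  intro u v h
  induction h with
  | add a b =>
      simp only [map_add, ρ0_r]
      apply Finsupp.lhom_ext
      intro m q
      simp only [LinearMap.add_apply, Dr_single, map_add, add_mul, Finsupp.single_add]
  | mul a b =>
      simp only [map_mul, ρ0_r]
      apply Finsupp.lhom_ext
      intro m q
      simp only [Module.End.mul_apply, Dr_single, map_mul, mul_assoc]
  | alg c =>
      simp only [ρ0_r, AlgHom.commutes]
      apply Finsupp.lhom_ext
      intro m q
      rw [show (algebraMap k k[X]) c = C c from rfl]
      simp only [Dr_single, Module.algebraMap_end_apply, Finsupp.smul_single]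
      congr 1
      rw [show (τ (-m)) (C c) = C c by
        simpa using (τ (-m) : k[X] ≃ₐ[k] k[X]).commutes c]
      rw [smul_eq_C_mul]
  | xy =>
      simp only [map_mul, ρ0_r, ρ0_x, ρ0_y]
      apply Finsupp.lhom_ext
      intro m q
      simp only [Module.End.mul_apply, Ly_single, Lx_single, Dr_single, sub_add_cancel]
  | yx =>
      simp only [map_mul, ρ0_r, ρ0_x, ρ0_y]
      apply Finsupp.lhom_ext
      intro m q
      simp only [Module.End.mul_apply, Lx_single, Ly_single, Dr_single, add_sub_cancel_right,
        σ_symm_eq_τ, τ_τ]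
      congr 2
      ring_nf
  | xr a =>
      simp only [map_mul, ρ0_r, ρ0_x]
      apply Finsupp.lhom_ext
      intro m q
      simp only [Module.End.mul_apply, Dr_single, Lx_single, σ_eq_τ, τ_τ]
      congr 2
      ring_nf
  | yr a =>
      simp only [map_mul, ρ0_r, ρ0_y]
      apply Finsupp.lhom_ext
      intro m q
      simp only [Module.End.mul_apply, Dr_single, Ly_single, σ_symm_eq_τ, τ_τ]
      rw [← mul_assoc, ← mul_assoc, mul_comm ((τ (-m)) f)]
      congr 3
      ring_nf

/-- The representation of `A` on `W`. -/
noncomputable def ρ : GWAk k f →ₐ[k] Module.End k (W k) :=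
  RingQuot.liftAlgHom k ⟨ρ0 f, ρ0_rel f⟩

@[simp] lemma ρ_ra (p : k[X]) : ρ f (ra f p) = Dr p := by
  rw [ρ, ra, GWA.r, RingQuot.liftAlgHom_mkAlgHom_apply]; simp

@[simp] lemma ρ_Xg : ρ f (Xg f) = Lx := by
  rw [ρ, Xg, GWA.X, RingQuot.liftAlgHom_mkAlgHom_apply]; simp

@[simp] lemma ρ_Yg : ρ f (Yg f) = Ly f := by
  rw [ρ, Yg, GWA.Y, RingQuot.liftAlgHom_mkAlgHom_apply]; simp

end GWAaux
namespace GWAaux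
open Polynomial Finsupp

variable {k : Type} [Field k] (f : k[X])

/-- `r` as a `k`-linear map into `A`. -/
noncomputable def rlin : k[X] →ₗ[k] GWAk k f where
  toFun := ra f
  map_add' := ra_add f
  map_smul' := ra_smul f

@[simp] lemma rlin_apply (p : k[X]) : rlin f p = ra f p := rfl

/-- The monomial basis elements `v m = x^m` (`m ≥ 0`) or `y^{-m}` (`m < 0`). -/
noncomputable def v (m : ℤ) : GWAk k f :=
  if 0 ≤ m then (Xg f) ^ m.toNat else (Yg f) ^ (-m).toNat

lemma v_nonneg {m : ℤ} (h : 0 ≤ m) : v f m = (Xg f) ^ m.toNat := if_pos h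
lemma v_neg {m : ℤ} (h : m < 0) : v f m = (Yg f) ^ (-m).toNat := if_neg (not_le.mpr h)
@[simp] lemma v_zero : v f 0 = 1 := by simp [v]

/-- The "sum of `r(p_m) v_m`" linear map. -/
noncomputable def Φ : W k →ₗ[k] GWAk k f :=
  Finsupp.lsum k (fun m => (LinearMap.mulRight k (v f m)).comp (rlin f))

lemma Φ_single (m : ℤ) (p : k[X]) : Φ f (Finsupp.single m p) = ra f p * v f m := by
  simp only [Φ, Finsupp.lsum_single, LinearMap.coe_comp, Function.comp_apply,
    rlin_apply, LinearMap.mulRight_apply]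

lemma Φ_apply (d : W k) : Φ f d = d.sum fun m p => ra f p * v f m := rfl

lemma Xpow_ra (n : ℕ) (q : k[X]) :
    (Xg f) ^ n * ra f q = ra f (τ n q) * (Xg f) ^ n := by
  induction n generalizing q with
  | zero => simp
  | succ n ih =>
      rw [pow_succ, mul_assoc, Xg_mul_ra, ← mul_assoc, ih, mul_assoc, ← pow_succ, τ_τ]
      norm_cast

lemma Ypow_ra (n : ℕ) (q : k[X]) :
    (Yg f) ^ n * ra f q = ra f (τ (-n) q) * (Yg f) ^ n := by
  induction n generalizing q with
  | zero => simp
  | succ n ih =>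
      rw [pow_succ, mul_assoc, Yg_mul_ra, ← mul_assoc, ih, mul_assoc, ← pow_succ, τ_τ]
      congr 2
      push_cast
      ring

lemma v_ra (m : ℤ) (q : k[X]) : v f m * ra f q = ra f (τ m q) * v f m := by
  rcases le_or_gt 0 m with h | h
  · rw [v_nonneg f h, Xpow_ra]
    congr 2
    simp [Int.toNat_of_nonneg h]
  · rw [v_neg f h, Ypow_ra]
    congr 2
    simp [Int.toNat_of_nonneg (by omega : (0:ℤ) ≤ -m)]

/-- Coefficients appearing when `y^n` is applied to `e_0`. -/
noncomputable def cY : ℕ → k[X]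
  | 0 => 1
  | n + 1 => τ n f * cY n

lemma cY_ne_zero (hf0 : f ≠ 0) (n : ℕ) : cY f n ≠ 0 := by
  induction n with
  | zero => simp [cY]
  | succ n ih =>
      simp only [cY]
      exact mul_ne_zero ((map_ne_zero_iff _ (τ (n:ℤ)).injective).mpr hf0) ih

/-- nonzero normalising coefficients. -/
noncomputable def cc (m : ℤ) : k[X] := if 0 ≤ m then 1 else cY f (-m).toNat

lemma cc_ne_zero (hf0 : f ≠ 0) (m : ℤ) : cc f m ≠ 0 := by
  unfold cc
  split
  · exact one_ne_zero
  · exact cY_ne_zero f hf0 _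

lemma Lx_pow_e0 (n : ℕ) : (Lx ^ n : Module.End k (W k)) (Finsupp.single 0 1)
    = Finsupp.single (n : ℤ) 1 := by
  induction n with
  | zero => simp
  | succ n ih =>
      rw [pow_succ', Module.End.mul_apply, ih, Lx_single]
      norm_cast

lemma Ly_pow_e0 (n : ℕ) : ((Ly f) ^ n : Module.End k (W k)) (Finsupp.single 0 1)
    = Finsupp.single (-(n : ℤ)) (cY f n) := by
  induction n with
  | zero => simp [cY]
  | succ n ih =>
      rw [pow_succ', Module.End.mul_apply, ih, Ly_single]
      have h1 : -(n:ℤ) - 1 = -((n:ℕ)+1:ℕ) := by push_cast; ring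
      rw [h1]
      congr 1
      simp only [neg_neg, cY]

lemma ρ_v_e0 (m : ℤ) : ρ f (v f m) (Finsupp.single 0 1) = Finsupp.single m (cc f m) := by
  rcases le_or_gt 0 m with h | h
  · rw [v_nonneg f h, map_pow, ρ_Xg, Lx_pow_e0, cc, if_pos h, Int.toNat_of_nonneg h]
  · rw [v_neg f h, map_pow, ρ_Yg, Ly_pow_e0, cc, if_neg (not_le.mpr h)]
    congr 1
    omega

lemma ρ_Φ_e0 (d : W k) :
    ρ f (Φ f d) (Finsupp.single 0 1) = d.sum fun m p => Finsupp.single m (τ (-m) p * cc f m) := by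
  induction d using Finsupp.induction_linear with
  | zero => simp
  | add a b ha hb =>
      rw [map_add, map_add, LinearMap.add_apply, ha, hb, Finsupp.sum_add_index]
      · intro m _; simp
      · intro m _ p q; simp only [map_add, add_mul, Finsupp.single_add]
  | single m p =>
      rw [Φ_single, map_mul, Module.End.mul_apply, ρ_v_e0, ρ_ra, Dr_single,
        Finsupp.sum_single_index]
      simp

lemma coord_sum (d : W k) (g : ℤ → k[X] → k[X]) (hg : ∀ m, g m 0 = 0) (m₀ : ℤ) :
    (d.sum fun m p => Finsupp.single m (g m p)) m₀ = g m₀ (d m₀) := by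
  classical
  rw [Finsupp.sum_apply, Finsupp.sum]
  by_cases hm : m₀ ∈ d.support
  · rw [Finset.sum_eq_single m₀]
    · rw [Finsupp.single_apply, if_pos rfl]
    · intro b _ hb
      rw [Finsupp.single_apply, if_neg hb]
    · intro h; exact absurd hm h
  · have hd0 : d m₀ = 0 := Finsupp.notMem_support_iff.mp hm
    rw [hd0, hg]
    apply Finset.sum_eq_zero
    intro b hb
    have hbm : b ≠ m₀ := by rintro rfl; exact hm hb
    rw [Finsupp.single_apply, if_neg hbm]

lemma Φ_injective (hf0 : f ≠ 0) : Function.Injective (Φ f) := by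
  have key : ∀ d : W k, Φ f d = 0 → d = 0 := by
    intro d hd
    have h0 := ρ_Φ_e0 f d
    rw [hd, map_zero, LinearMap.zero_apply] at h0
    apply Finsupp.ext
    intro m₀
    have hc := DFunLike.congr_fun h0 m₀
    rw [coord_sum d (fun m p => τ (-m) p * cc f m) (by intro m; simp) m₀] at hc
    simp only [Finsupp.coe_zero, Pi.zero_apply] at hc ⊢
    rcases mul_eq_zero.mp hc.symm with h | h
    · exact (map_eq_zero_iff _ (τ (-m₀)).injective).mp h
    · exact absurd h (cc_ne_zero f hf0 m₀)
  intro a b hab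
  have h := key (a - b) (by rw [map_sub, hab, sub_self])
  exact sub_eq_zero.mp h

end GWAaux
namespace GWAaux
open Polynomial Finsupp

variable {k : Type} [Field k] (f : k[X])

lemma v_eq_Ypow {m : ℤ} (h : m ≤ 0) : v f m = (Yg f) ^ (-m).toNat := by
  rcases lt_or_eq_of_le h with h' | h'
  · exact v_neg f h'
  · subst h'; simp

/-- factor appearing in `v m * x = r(xfac m) v (m+1)`. -/
noncomputable def xfac (m : ℤ) : k[X] := if 0 ≤ m then 1 else τ m f

/-- factor appearing in `v m * y = r(yfac m) v (m-1)`. -/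
noncomputable def yfac (m : ℤ) : k[X] := if m ≤ 0 then 1 else τ (m-1) f

lemma v_mul_X (m : ℤ) : v f m * Xg f = ra f (xfac f m) * v f (m + 1) := by
  rcases le_or_gt 0 m with h | h
  · have he : (m+1).toNat = m.toNat + 1 := by omega
    rw [v_nonneg f h, xfac, if_pos h, ra_one, one_mul, v_nonneg f (by omega), he, pow_succ]
  · rw [v_neg f h, xfac, if_neg (not_le.mpr h)]
    have hj : (-m).toNat = (-(m+1)).toNat + 1 := by omega
    rw [hj, pow_succ, mul_assoc, Yg_mul_Xg, Ypow_ra, v_eq_Ypow f (by omega), τ_τ]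
    have hm' : -(((-(m+1)).toNat : ℤ)) + -1 = m := by omega
    rw [hm']
lemma v_mul_Y (m : ℤ) : v f m * Yg f = ra f (yfac f m) * v f (m - 1) := by
  rcases le_or_gt m 0 with h | h
  · have he : (-(m-1)).toNat = (-m).toNat + 1 := by omega
    rw [v_eq_Ypow f h, yfac, if_pos h, ra_one, one_mul, v_neg f (by omega), he, pow_succ]
  · rw [v_nonneg f (by omega : (0:ℤ) ≤ m), yfac, if_neg (not_le.mpr h)]
    have hj : m.toNat = (m-1).toNat + 1 := by omega
    rw [hj, pow_succ, mul_assoc, Xg_mul_Yg, Xpow_ra, v_nonneg f (by omega : (0:ℤ) ≤ m - 1)]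
    have hm' : (((m-1).toNat : ℤ)) = m - 1 := by omega
    rw [hm']

/-- The range of `Φ`. -/
noncomputable def SR : Submodule k (GWAk k f) := LinearMap.range (Φ f)

lemma one_mem_SR : (1 : GWAk k f) ∈ SR f :=
  ⟨Finsupp.single 0 1, by rw [Φ_single, ra_one, v_zero, one_mul]⟩

lemma mul_ra_mem_SR (u : GWAk k f) (hu : u ∈ SR f) (q : k[X]) : u * ra f q ∈ SR f := by
  obtain ⟨d, rfl⟩ := hu
  induction d using Finsupp.induction_linear with
  | zero => exact ⟨0, by simp⟩
  | add a b ha hb =>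
      rw [map_add, add_mul]
      exact Submodule.add_mem _ ha hb
  | single m p =>
      refine ⟨Finsupp.single m (p * τ m q), ?_⟩
      rw [Φ_single, Φ_single, ra_mul, mul_assoc, ← v_ra, ← mul_assoc]

lemma mul_X_mem_SR (u : GWAk k f) (hu : u ∈ SR f) : u * Xg f ∈ SR f := by
  obtain ⟨d, rfl⟩ := hu
  induction d using Finsupp.induction_linear with
  | zero => exact ⟨0, by simp⟩
  | add a b ha hb =>
      rw [map_add, add_mul]
      exact Submodule.add_mem _ ha hb
  | single m p =>
      refine ⟨Finsupp.single (m+1) (p * xfac f m), ?_⟩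
      rw [Φ_single, Φ_single, ra_mul, mul_assoc, ← v_mul_X, ← mul_assoc]

lemma mul_Y_mem_SR (u : GWAk k f) (hu : u ∈ SR f) : u * Yg f ∈ SR f := by
  obtain ⟨d, rfl⟩ := hu
  induction d using Finsupp.induction_linear with
  | zero => exact ⟨0, by simp⟩
  | add a b ha hb =>
      rw [map_add, add_mul]
      exact Submodule.add_mem _ ha hb
  | single m p =>
      refine ⟨Finsupp.single (m-1) (p * yfac f m), ?_⟩
      rw [Φ_single, Φ_single, ra_mul, mul_assoc, ← v_mul_Y, ← mul_assoc]

/-- The set of `t` such that `SR` is stable under right multiplication by `t`; a subalgebra. -/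
noncomputable def TT : Subalgebra k (GWAk k f) where
  carrier := {t | ∀ u ∈ SR f, u * t ∈ SR f}
  mul_mem' := by
    intro s t hs ht u hu
    rw [← mul_assoc]
    exact ht _ (hs _ hu)
  add_mem' := by
    intro s t hs ht u hu
    rw [mul_add]
    exact Submodule.add_mem _ (hs _ hu) (ht _ hu)
  algebraMap_mem' := by
    intro c u hu
    rw [← Algebra.commutes, ← Algebra.smul_def]
    exact Submodule.smul_mem _ _ hu

lemma mem_TT (t : GWAk k f) : t ∈ TT f := by
  obtain ⟨w, rfl⟩ := RingQuot.mkAlgHom_surjective k (GWArel k k[X] (σA k) f) t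
  induction w using FreeAlgebra.induction with
  | grade0 c => rw [AlgHom.commutes]; exact (TT f).algebraMap_mem c
  | grade1 g =>
      cases g with
      | r q => exact fun u hu => mul_ra_mem_SR f u hu q
      | x => exact fun u hu => mul_X_mem_SR f u hu
      | y => exact fun u hu => mul_Y_mem_SR f u hu
  | mul a b ha hb => rw [map_mul]; exact mul_mem ha hb
  | add a b ha hb => rw [map_add]; exact add_mem ha hb

lemma Φ_surjective : Function.Surjective (Φ f) := by
  intro u
  have hu : u ∈ SR f := by
    simpa using mem_TT f u 1 (one_mem_SR f)
  exact hu

end GWAaux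
namespace GWAaux
open Polynomial Finsupp

variable {k : Type} [Field k] (f : k[X])

lemma X_mul_v (m : ℤ) : Xg f * v f m = ra f (if 0 ≤ m then 1 else f) * v f (m + 1) := by
  rcases le_or_gt 0 m with h | h
  · have he : (m+1).toNat = m.toNat + 1 := by omega
    rw [if_pos h, ra_one, one_mul, v_nonneg f h, v_nonneg f (by omega), he, pow_succ']
  · rw [if_neg (not_le.mpr h), v_neg f h]
    have hj : (-m).toNat = (-(m+1)).toNat + 1 := by omega
    rw [hj, pow_succ', ← mul_assoc, Xg_mul_Yg, v_eq_Ypow f (by omega)]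

lemma Y_mul_v (m : ℤ) : Yg f * v f m = ra f (if m ≤ 0 then 1 else τ (-1) f) * v f (m - 1) := by
  rcases le_or_gt m 0 with h | h
  · have he : (-(m-1)).toNat = (-m).toNat + 1 := by omega
    rw [if_pos h, ra_one, one_mul, v_eq_Ypow f h, v_neg f (by omega), he, pow_succ']
  · rw [if_neg (not_le.mpr h), v_nonneg f (by omega : (0:ℤ) ≤ m)]
    have hj : m.toNat = (m-1).toNat + 1 := by omega
    rw [hj, pow_succ', ← mul_assoc, Yg_mul_Xg, v_nonneg f (by omega : (0:ℤ) ≤ m - 1)]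

/-- coordinates of left multiplication by `r p`. -/
noncomputable def WL (p : k[X]) : W k →ₗ[k] W k :=
  Finsupp.lsum k (fun m => (Finsupp.lsingle m).comp (LinearMap.mulLeft k p))

/-- coordinates of left multiplication by `x`. -/
noncomputable def WLX : W k →ₗ[k] W k :=
  Finsupp.lsum k (fun m => (Finsupp.lsingle (m+1)).comp
    ((LinearMap.mulRight k (if 0 ≤ m then 1 else f)).comp (τ 1 : k[X] ≃ₐ[k] k[X]).toLinearMap))

/-- coordinates of left multiplication by `y`. -/
noncomputable def WLY : W k →ₗ[k] W k :=
  Finsupp.lsum k (fun m => (Finsupp.lsingle (m-1)).comp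
    ((LinearMap.mulRight k (if m ≤ 0 then 1 else τ (-1) f)).comp
      (τ (-1) : k[X] ≃ₐ[k] k[X]).toLinearMap))

/-- coordinates of right multiplication by `r q`. -/
noncomputable def WR (q : k[X]) : W k →ₗ[k] W k :=
  Finsupp.lsum k (fun m => (Finsupp.lsingle m).comp (LinearMap.mulRight k (τ m q)))

/-- coordinates of right multiplication by `x`. -/
noncomputable def WRX : W k →ₗ[k] W k :=
  Finsupp.lsum k (fun m => (Finsupp.lsingle (m+1)).comp (LinearMap.mulRight k (xfac f m)))

/-- coordinates of right multiplication by `y`. -/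
noncomputable def WRY : W k →ₗ[k] W k :=
  Finsupp.lsum k (fun m => (Finsupp.lsingle (m-1)).comp (LinearMap.mulRight k (yfac f m)))

lemma WL_single (p q : k[X]) (m : ℤ) :
    WL p (Finsupp.single m q) = Finsupp.single m (p * q) := by
  simp only [WL, Finsupp.lsum_single, LinearMap.coe_comp, Function.comp_apply,
    LinearMap.mulLeft_apply, Finsupp.lsingle_apply]

lemma WLX_single (q : k[X]) (m : ℤ) :
    WLX f (Finsupp.single m q) = Finsupp.single (m+1) (τ 1 q * (if 0 ≤ m then 1 else f)) := by
  simp only [WLX, Finsupp.lsum_single, LinearMap.coe_comp, Function.comp_apply,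
    LinearMap.mulRight_apply, Finsupp.lsingle_apply, AlgEquiv.toLinearMap_apply]

lemma WLY_single (q : k[X]) (m : ℤ) :
    WLY f (Finsupp.single m q)
      = Finsupp.single (m-1) (τ (-1) q * (if m ≤ 0 then 1 else τ (-1) f)) := by
  simp only [WLY, Finsupp.lsum_single, LinearMap.coe_comp, Function.comp_apply,
    LinearMap.mulRight_apply, Finsupp.lsingle_apply, AlgEquiv.toLinearMap_apply]

lemma WR_single (p q : k[X]) (m : ℤ) :
    WR q (Finsupp.single m p) = Finsupp.single m (p * τ m q) := by
  simp only [WR, Finsupp.lsum_single, LinearMap.coe_comp, Function.comp_apply,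
    LinearMap.mulRight_apply, Finsupp.lsingle_apply]

lemma WRX_single (p : k[X]) (m : ℤ) :
    WRX f (Finsupp.single m p) = Finsupp.single (m+1) (p * xfac f m) := by
  simp only [WRX, Finsupp.lsum_single, LinearMap.coe_comp, Function.comp_apply,
    LinearMap.mulRight_apply, Finsupp.lsingle_apply]

lemma WRY_single (p : k[X]) (m : ℤ) :
    WRY f (Finsupp.single m p) = Finsupp.single (m-1) (p * yfac f m) := by
  simp only [WRY, Finsupp.lsum_single, LinearMap.coe_comp, Function.comp_apply,
    LinearMap.mulRight_apply, Finsupp.lsingle_apply]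

lemma Φ_WL (p : k[X]) (d : W k) : ra f p * Φ f d = Φ f (WL p d) := by
  induction d using Finsupp.induction_linear with
  | zero => simp
  | add a b ha hb => rw [map_add, mul_add, ha, hb, map_add, map_add]
  | single m q => rw [WL_single, Φ_single, Φ_single, ra_mul, mul_assoc]

lemma Φ_WLX (d : W k) : Xg f * Φ f d = Φ f (WLX f d) := by
  induction d using Finsupp.induction_linear with
  | zero => simp
  | add a b ha hb => rw [map_add, mul_add, ha, hb, map_add, map_add]
  | single m q =>
      rw [WLX_single, Φ_single, Φ_single, ← mul_assoc, Xg_mul_ra, mul_assoc, X_mul_v,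
        ← mul_assoc, ← ra_mul]

lemma Φ_WLY (d : W k) : Yg f * Φ f d = Φ f (WLY f d) := by
  induction d using Finsupp.induction_linear with
  | zero => simp
  | add a b ha hb => rw [map_add, mul_add, ha, hb, map_add, map_add]
  | single m q =>
      rw [WLY_single, Φ_single, Φ_single, ← mul_assoc, Yg_mul_ra, mul_assoc, Y_mul_v,
        ← mul_assoc, ← ra_mul]

lemma Φ_WR (q : k[X]) (d : W k) : Φ f d * ra f q = Φ f (WR q d) := by
  induction d using Finsupp.induction_linear with
  | zero => simp
  | add a b ha hb => rw [map_add, add_mul, ha, hb, map_add, map_add]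
  | single m p => rw [WR_single, Φ_single, Φ_single, mul_assoc, v_ra, ← mul_assoc, ← ra_mul]

lemma Φ_WRX (d : W k) : Φ f d * Xg f = Φ f (WRX f d) := by
  induction d using Finsupp.induction_linear with
  | zero => simp
  | add a b ha hb => rw [map_add, add_mul, ha, hb, map_add, map_add]
  | single m p => rw [WRX_single, Φ_single, Φ_single, mul_assoc, v_mul_X, ← mul_assoc, ← ra_mul]

lemma Φ_WRY (d : W k) : Φ f d * Yg f = Φ f (WRY f d) := by
  induction d using Finsupp.induction_linear with
  | zero => simp
  | add a b ha hb => rw [map_add, add_mul, ha, hb, map_add, map_add]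
  | single m p => rw [WRY_single, Φ_single, Φ_single, mul_assoc, v_mul_Y, ← mul_assoc, ← ra_mul]

lemma coord_sum_shift (d : W k) (t : ℤ) (g : ℤ → k[X] → k[X]) (hg : ∀ m, g m 0 = 0) (m₀ : ℤ) :
    (d.sum fun m p => Finsupp.single (m + t) (g m p)) m₀ = g (m₀ - t) (d (m₀ - t)) := by
  classical
  rw [Finsupp.sum_apply, Finsupp.sum]
  by_cases hm : m₀ - t ∈ d.support
  · rw [Finset.sum_eq_single (m₀ - t)]
    · rw [Finsupp.single_apply, if_pos (by omega)]
    · intro b _ hb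
      rw [Finsupp.single_apply, if_neg (by omega)]
    · intro h; exact absurd hm h
  · have hd0 : d (m₀ - t) = 0 := Finsupp.notMem_support_iff.mp hm
    rw [hd0, hg]
    apply Finset.sum_eq_zero
    intro b hb
    have hbm : b ≠ m₀ - t := by rintro rfl; exact hm hb
    rw [Finsupp.single_apply, if_neg (by omega)]

lemma WL_apply (p : k[X]) (d : W k) (m₀ : ℤ) : WL p d m₀ = p * d m₀ := by
  have : WL p d = d.sum fun m q => Finsupp.single (m + 0) (p * q) := by
    simp only [add_zero]; rfl
  rw [this, coord_sum_shift d 0 (fun _ q => p * q) (by intro m; simp) m₀, sub_zero]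

lemma WR_apply (q : k[X]) (d : W k) (m₀ : ℤ) : WR q d m₀ = d m₀ * τ m₀ q := by
  have : WR q d = d.sum fun m p => Finsupp.single (m + 0) (p * τ m q) := by
    simp only [add_zero]; rfl
  rw [this, coord_sum_shift d 0 (fun m p => p * τ m q) (by intro m; simp) m₀, sub_zero]

lemma WLY_apply (d : W k) (m₀ : ℤ) :
    WLY f d m₀ = τ (-1) (d (m₀ + 1)) * (if m₀ + 1 ≤ 0 then 1 else τ (-1) f) := by
  have : WLY f d = d.sum fun m q =>
      Finsupp.single (m + (-1)) (τ (-1) q * (if m ≤ 0 then 1 else τ (-1) f)) := by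
    refine Finsupp.induction_linear d ?_ ?_ ?_
    · simp
    · intro a b ha hb
      rw [map_add, ha, hb, Finsupp.sum_add_index]
      · intro m _; simp
      · intro m _ p q; rw [map_add, add_mul, Finsupp.single_add]
    · intro m q
      rw [WLY_single, Finsupp.sum_single_index (by simp)]
      congr 1
  rw [this, coord_sum_shift d (-1) _ (by intro m; simp) m₀]
  rw [show m₀ - -1 = m₀ + 1 by ring]

lemma WRX_apply (d : W k) (m₀ : ℤ) :
    WRX f d m₀ = d (m₀ - 1) * xfac f (m₀ - 1) := by
  have : WRX f d = d.sum fun m p => Finsupp.single (m + 1) (p * xfac f m) := rfl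
  rw [this, coord_sum_shift d 1 (fun m p => p * xfac f m) (by intro m; simp) m₀]

lemma WRY_apply (d : W k) (m₀ : ℤ) :
    WRY f d m₀ = d (m₀ + 1) * yfac f (m₀ + 1) := by
  have : WRY f d = d.sum fun m p => Finsupp.single (m + (-1)) (p * yfac f m) := by
    refine Finsupp.induction_linear d ?_ ?_ ?_
    · simp
    · intro a b ha hb
      rw [map_add, ha, hb, Finsupp.sum_add_index]
      · intro m _; simp
      · intro m _ p q; rw [add_mul, Finsupp.single_add]
    · intro m q
      rw [WRY_single, Finsupp.sum_single_index (by simp)]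
      congr 1
  rw [this, coord_sum_shift d (-1) _ (by intro m; simp) m₀]
  rw [show m₀ - -1 = m₀ + 1 by ring]

end GWAaux
namespace GWAaux
open Polynomial Finsupp

variable {k : Type} [Field k] (f : k[X])

/-- The basis isomorphism. -/
noncomputable def ΦE (hf0 : f ≠ 0) : W k ≃ₗ[k] GWAk k f :=
  LinearEquiv.ofBijective (Φ f) ⟨Φ_injective f hf0, Φ_surjective f⟩

/-- Coordinates of an element of the GWA in the basis `v m`. -/
noncomputable def coords (hf0 : f ≠ 0) (u : GWAk k f) : W k := (ΦE f hf0).symm u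

variable (hf0 : f ≠ 0)
include hf0

lemma Φ_coords (u : GWAk k f) : Φ f (coords f hf0 u) = u :=
  (ΦE f hf0).apply_symm_apply u

lemma coords_unique {d : W k} {u : GWAk k f} (h : Φ f d = u) : coords f hf0 u = d := by
  have : (ΦE f hf0) d = u := h
  rw [coords, ← this, LinearEquiv.symm_apply_apply]

lemma coords_zero : coords f hf0 0 = 0 := coords_unique f hf0 (map_zero _)

lemma coords_add (u w : GWAk k f) :
    coords f hf0 (u + w) = coords f hf0 u + coords f hf0 w := map_add _ _ _

lemma coords_one : coords f hf0 1 = Finsupp.single 0 1 :=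
  coords_unique f hf0 (by rw [Φ_single, ra_one, v_zero, one_mul])

lemma coords_mul_ra (u : GWAk k f) (q : k[X]) :
    coords f hf0 (u * ra f q) = WR q (coords f hf0 u) :=
  coords_unique f hf0 (by rw [← Φ_WR, Φ_coords])

lemma coords_mul_X (u : GWAk k f) :
    coords f hf0 (u * Xg f) = WRX f (coords f hf0 u) :=
  coords_unique f hf0 (by rw [← Φ_WRX, Φ_coords])

lemma coords_mul_Y (u : GWAk k f) :
    coords f hf0 (u * Yg f) = WRY f (coords f hf0 u) :=
  coords_unique f hf0 (by rw [← Φ_WRY, Φ_coords])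

lemma coords_ra_mul (p : k[X]) (u : GWAk k f) :
    coords f hf0 (ra f p * u) = WL p (coords f hf0 u) :=
  coords_unique f hf0 (by rw [← Φ_WL, Φ_coords])

lemma coords_Y_mul (u : GWAk k f) :
    coords f hf0 (Yg f * u) = WLY f (coords f hf0 u) :=
  coords_unique f hf0 (by rw [← Φ_WLY, Φ_coords])

lemma ra_left_cancel {p : k[X]} (hp : p ≠ 0) {u w : GWAk k f}
    (h : ra f p * u = ra f p * w) : u = w := by
  have h1 : Φ f (WL p (coords f hf0 u)) = Φ f (WL p (coords f hf0 w)) := by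
    rw [← Φ_WL, ← Φ_WL, Φ_coords, Φ_coords]; exact h
  have h2 := Φ_injective f hf0 h1
  have h3 : coords f hf0 u = coords f hf0 w := by
    apply Finsupp.ext
    intro m
    have := DFunLike.congr_fun h2 m
    rw [WL_apply, WL_apply] at this
    exact mul_left_cancel₀ hp this
  calc u = Φ f (coords f hf0 u) := (Φ_coords f hf0 u).symm
    _ = Φ f (coords f hf0 w) := by rw [h3]
    _ = w := Φ_coords f hf0 w

lemma ra_right_cancel0 {p : k[X]} (hp : p ≠ 0) {u : GWAk k f}
    (h : u * ra f p = 0) : u = 0 := by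
  have h1 : Φ f (WR p (coords f hf0 u)) = Φ f 0 := by
    rw [← Φ_WR, Φ_coords, map_zero]; exact h
  have h2 := Φ_injective f hf0 h1
  have h3 : coords f hf0 u = 0 := by
    apply Finsupp.ext
    intro m
    have := DFunLike.congr_fun h2 m
    rw [WR_apply] at this
    simp only [Finsupp.coe_zero, Pi.zero_apply] at this ⊢
    exact (mul_eq_zero.mp this).resolve_right
      ((map_ne_zero_iff _ (τ m).injective).mpr hp)
  calc u = Φ f (coords f hf0 u) := (Φ_coords f hf0 u).symm
    _ = Φ f 0 := by rw [h3]
    _ = 0 := map_zero _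

end GWAaux
namespace GWAaux
open Polynomial Finsupp MulOpposite

variable {k : Type} [Field k] (f : k[X]) (hf0 : f ≠ 0) (a : k[X])

lemma op_smul_gwa (t u : GWAk k f) : (op t : (GWAk k f)ᵐᵒᵖ) • u = u * t := rfl

/-- The right ideal `aA + xA`. -/
noncomputable def Ia : Submodule (GWAk k f)ᵐᵒᵖ (GWAk k f) :=
  Submodule.span ((GWAk k f)ᵐᵒᵖ) {ra f a, Xg f}

/-- the divisibility property characterizing membership in `Ia`. -/
def Pdvd (u : GWAk k f) : Prop := ∀ m : ℤ, m ≤ 0 → a ∣ coords f hf0 u m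

lemma Pdvd_zero : Pdvd f hf0 a 0 := by
  intro m _
  rw [coords_zero]
  simp

lemma Pdvd_add {u w : GWAk k f} (hu : Pdvd f hf0 a u) (hw : Pdvd f hf0 a w) :
    Pdvd f hf0 a (u + w) := by
  intro m hm
  rw [coords_add]
  exact dvd_add (hu m hm) (hw m hm)

lemma Pdvd_mul_ra {u : GWAk k f} (hu : Pdvd f hf0 a u) (q : k[X]) :
    Pdvd f hf0 a (u * ra f q) := by
  intro m hm
  rw [coords_mul_ra, WR_apply]
  exact (hu m hm).mul_right _

lemma Pdvd_mul_X {u : GWAk k f} (hu : Pdvd f hf0 a u) :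
    Pdvd f hf0 a (u * Xg f) := by
  intro m hm
  rw [coords_mul_X, WRX_apply]
  exact (hu (m-1) (by omega)).mul_right _

lemma Pdvd_mul_Y (haf : a ∣ f) {u : GWAk k f} (hu : Pdvd f hf0 a u) :
    Pdvd f hf0 a (u * Yg f) := by
  intro m hm
  rw [coords_mul_Y, WRY_apply]
  rcases le_or_gt (m + 1) 0 with h | h
  · exact (hu (m+1) h).mul_right _
  · have hm0 : m = 0 := by omega
    subst hm0
    rw [yfac, if_neg (by omega)]
    norm_num
    exact (haf.mul_left _)

/-- Subalgebra of elements preserving `Pdvd` under right multiplication. -/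
noncomputable def TP (haf : a ∣ f) : Subalgebra k (GWAk k f) where
  carrier := {t | ∀ u, Pdvd f hf0 a u → Pdvd f hf0 a (u * t)}
  mul_mem' := by
    intro s t hs ht u hu
    rw [← mul_assoc]
    exact ht _ (hs _ hu)
  add_mem' := by
    intro s t hs ht u hu
    intro m hm
    rw [mul_add, coords_add]
    exact dvd_add (hs u hu m hm) (ht u hu m hm)
  algebraMap_mem' := by
    intro c u hu
    have : algebraMap k (GWAk k f) c = ra f (C c) := by
      rw [← ra_algebraMap]; rfl
    rw [this]
    exact Pdvd_mul_ra f hf0 a hu _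

lemma mem_TP (haf : a ∣ f) (t : GWAk k f) : t ∈ TP f hf0 a haf := by
  obtain ⟨w, rfl⟩ := RingQuot.mkAlgHom_surjective k (GWArel k k[X] (σA k) f) t
  induction w using FreeAlgebra.induction with
  | grade0 c => rw [AlgHom.commutes]; exact (TP f hf0 a haf).algebraMap_mem c
  | grade1 g =>
      cases g with
      | r q => exact fun u hu => Pdvd_mul_ra f hf0 a hu q
      | x => exact fun u hu => Pdvd_mul_X f hf0 a hu
      | y => exact fun u hu => Pdvd_mul_Y f hf0 a haf hu
  | mul s t hs ht => rw [map_mul]; exact mul_mem hs ht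
  | add s t hs ht => rw [map_add]; exact add_mem hs ht

lemma coords_ra (p : k[X]) : coords f hf0 (ra f p) = Finsupp.single 0 p :=
  coords_unique f hf0 (by rw [Φ_single, v_zero, mul_one])

lemma coords_Xg : coords f hf0 (Xg f) = Finsupp.single 1 1 := by
  apply coords_unique f hf0
  rw [Φ_single, ra_one, one_mul, v_nonneg f (by omega : (0:ℤ) ≤ 1)]
  norm_num

lemma mem_Ia_dvd (haf : a ∣ f) {u : GWAk k f} (hu : u ∈ Ia f a) : Pdvd f hf0 a u := by
  induction hu using Submodule.span_induction with
  | mem x hx =>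
      rcases hx with hx | hx
      · subst hx
        intro m hm
        rw [coords_ra, Finsupp.single_apply]
        split <;> simp
      · rw [Set.mem_singleton_iff] at hx
        subst hx
        intro m hm
        rw [coords_Xg, Finsupp.single_apply, if_neg (by omega)]
        simp
  | zero => exact Pdvd_zero f hf0 a
  | add x y hx hy ihx ihy => exact Pdvd_add f hf0 a ihx ihy
  | smul t x hx ih =>
      rw [← op_unop t, op_smul_gwa]
      exact mem_TP f hf0 a haf (unop t) x ih

lemma dvd_mem_Ia {u : GWAk k f} (h : Pdvd f hf0 a u) : u ∈ Ia f a := by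
  suffices h2 : Φ f (coords f hf0 u) ∈ Ia f a by rwa [Φ_coords] at h2
  rw [Φ_apply, Finsupp.sum]
  apply Submodule.sum_mem
  intro m hmsupp
  rcases le_or_gt m 0 with hm | hm
  · obtain ⟨q, hq⟩ := h m hm
    rw [hq, ra_mul, mul_assoc, ← op_smul_gwa]
    exact Submodule.smul_mem _ _ (Submodule.subset_span (by left; rfl))
  · have hj : m.toNat = (m-1).toNat + 1 := by omega
    rw [v_nonneg f (by omega), hj, pow_succ', ← mul_assoc]
    have hcomm : ra f (coords f hf0 u m) * Xg f = Xg f * ra f (τ (-1) (coords f hf0 u m)) := by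
      rw [Xg_mul_ra, τ_τ]
      norm_num
    rw [hcomm, mul_assoc, ← op_smul_gwa]
    exact Submodule.smul_mem _ _ (Submodule.subset_span (by right; rfl))

end GWAaux
namespace GWAaux
open Polynomial Finsupp MulOpposite

variable {k : Type} [Field k] (f : k[X])

/-- Left multiplication by a fixed element, as an `Aᵐᵒᵖ`-linear map. -/
noncomputable def lmul (c : GWAk k f) : GWAk k f →ₗ[(GWAk k f)ᵐᵒᵖ] GWAk k f where
  toFun u := c * u
  map_add' := mul_add c
  map_smul' := by
    intro t u
    simp only [RingHom.id_apply]
    rw [← op_unop t, op_smul_gwa, op_smul_gwa, mul_assoc]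

@[simp] lemma lmul_apply (c u : GWAk k f) : lmul f c u = c * u := rfl

/-- `A ≃ₗ[Aᵐᵒᵖ] Aᵐᵒᵖ`. -/
noncomputable def opE : GWAk k f ≃ₗ[(GWAk k f)ᵐᵒᵖ] (GWAk k f)ᵐᵒᵖ where
  toFun := op
  invFun := unop
  left_inv := fun _ => rfl
  right_inv := fun _ => rfl
  map_add' := fun _ _ => rfl
  map_smul' := fun _ _ => rfl

lemma projective_A : Module.Projective ((GWAk k f)ᵐᵒᵖ) (GWAk k f) :=
  Module.Projective.of_equiv (opE f).symm

lemma projective_AA : Module.Projective ((GWAk k f)ᵐᵒᵖ) (GWAk k f × GWAk k f) :=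
  Module.Projective.of_equiv ((opE f).symm.prodCongr (opE f).symm)

lemma exV (a g : k[X]) (hg : f = a * g) {w : GWAk k f} (hw : w ∈ Ia f a) :
    ∃ V : GWAk k f, ra f (τ (-1) a) * V = Yg f * w := by
  induction hw using Submodule.span_induction with
  | mem x hx =>
      rcases hx with hx | hx
      · subst hx
        exact ⟨Yg f, (Yg_mul_ra f a).symm⟩
      · rw [Set.mem_singleton_iff] at hx
        subst hx
        refine ⟨ra f (τ (-1) g), ?_⟩
        rw [← ra_mul, ← map_mul, ← hg, Yg_mul_Xg]
  | zero => exact ⟨0, by simp⟩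
  | add x y hx hy ihx ihy =>
      obtain ⟨V₁, h₁⟩ := ihx
      obtain ⟨V₂, h₂⟩ := ihy
      exact ⟨V₁ + V₂, by rw [mul_add, h₁, h₂, mul_add]⟩
  | smul t x hx ih =>
      obtain ⟨V, hV⟩ := ih
      refine ⟨V * unop t, ?_⟩
      rw [← op_unop t, op_smul_gwa, ← mul_assoc, hV, mul_assoc, unop_op]

end GWAaux
namespace GWAaux
open Polynomial Finsupp MulOpposite

variable {k : Type} [Field k] (f : k[X]) (a b : k[X])

lemma smul_gwa (t : (GWAk k f)ᵐᵒᵖ) (u : GWAk k f) : t • u = u * unop t := rfl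

/-- The right ideal `bA + yA`. -/
noncomputable def Ka : Submodule ((GWAk k f)ᵐᵒᵖ) (GWAk k f) :=
  Submodule.span ((GWAk k f)ᵐᵒᵖ) {ra f b, Yg f}

/-- The map `(u,v) ↦ yu - bv`. -/
noncomputable def ψfull : GWAk k f × GWAk k f →ₗ[(GWAk k f)ᵐᵒᵖ] GWAk k f :=
  (lmul f (Yg f)).comp (LinearMap.fst _ _ _) - (lmul f (ra f b)).comp (LinearMap.snd _ _ _)

lemma ψfull_apply (p : GWAk k f × GWAk k f) :
    ψfull f b p = Yg f * p.1 - ra f b * p.2 := rfl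

lemma ψfull_mem (p : GWAk k f × GWAk k f) : ψfull f b p ∈ Ka f b := by
  rw [ψfull_apply]
  apply sub_mem
  · rw [show Yg f * p.1 = (op p.1 : (GWAk k f)ᵐᵒᵖ) • Yg f from rfl]
    exact Submodule.smul_mem _ _ (Submodule.subset_span (by right; rfl))
  · rw [show ra f b * p.2 = (op p.2 : (GWAk k f)ᵐᵒᵖ) • ra f b from rfl]
    exact Submodule.smul_mem _ _ (Submodule.subset_span (by left; rfl))

/-- The codomain-restricted `ψ`. -/
noncomputable def ψm : GWAk k f × GWAk k f →ₗ[(GWAk k f)ᵐᵒᵖ] Ka f b :=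
  (ψfull f b).codRestrict (Ka f b) (ψfull_mem f b)

lemma ψm_surjective : Function.Surjective (ψm f b) := by
  have hle : Ka f b ≤ LinearMap.range (ψfull f b) := by
    apply Submodule.span_le.mpr
    rintro x (hx | hx)
    · have hv : ψfull f b (0, 1) = -(ra f b) := by
        rw [ψfull_apply]
        show Yg f * 0 - ra f b * 1 = -(ra f b)
        rw [mul_zero, mul_one, zero_sub]
      rw [hx, show ra f b = -(-(ra f b)) by rw [neg_neg], ← hv]
      exact neg_mem (LinearMap.mem_range_self _ _)
    · rw [Set.mem_singleton_iff] at hx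
      refine ⟨(1, 0), ?_⟩
      rw [ψfull_apply, hx]
      show Yg f * 1 - ra f b * 0 = Yg f
      rw [mul_one, mul_zero, sub_zero]
  rintro ⟨w, hw⟩
  obtain ⟨p, hp⟩ := hle hw
  exact ⟨p, Subtype.ext hp⟩

/-- The unique `V` with `b V = y w`, for `w` in the ideal `Ia`. -/
noncomputable def Vof (g : k[X]) (hg : f = a * g) (w : Ia f a) : GWAk k f :=
  (exV f a g hg w.2).choose

lemma Vof_spec (g : k[X]) (hg : f = a * g) (w : Ia f a) :
    ra f (τ (-1) a) * Vof f a g hg w = Yg f * (w : GWAk k f) :=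
  (exV f a g hg w.2).choose_spec

/-- second component of the map `φ`. -/
noncomputable def φ2 (hf0 : f ≠ 0) (ha0 : a ≠ 0) (g : k[X]) (hg : f = a * g) :
    Ia f a →ₗ[(GWAk k f)ᵐᵒᵖ] GWAk k f where
  toFun := Vof f a g hg
  map_add' := by
    intro w w'
    apply ra_left_cancel f hf0 ((map_ne_zero_iff _ (τ (-1)).injective).mpr ha0)
    rw [Vof_spec, mul_add, Vof_spec, Vof_spec, Submodule.coe_add, mul_add]
  map_smul' := by
    intro t w
    simp only [RingHom.id_apply]
    apply ra_left_cancel f hf0 ((map_ne_zero_iff _ (τ (-1)).injective).mpr ha0)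
    rw [Vof_spec]
    have h1 : ((t • w : Ia f a) : GWAk k f) = (w : GWAk k f) * unop t := rfl
    have h2 : t • Vof f a g hg w = Vof f a g hg w * unop t := rfl
    rw [h1, h2, ← mul_assoc, ← mul_assoc, Vof_spec]

/-- The map `φ : I → A ⊕ A`. -/
noncomputable def φm (hf0 : f ≠ 0) (ha0 : a ≠ 0) (g : k[X]) (hg : f = a * g) :
    Ia f a →ₗ[(GWAk k f)ᵐᵒᵖ] GWAk k f × GWAk k f :=
  (Ia f a).subtype.prod (φ2 f a hf0 ha0 g hg)

lemma φm_injective (hf0 : f ≠ 0) (ha0 : a ≠ 0) (g : k[X]) (hg : f = a * g) :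
    Function.Injective (φm f a hf0 ha0 g hg) := by
  intro w w' h
  exact Subtype.ext (congrArg Prod.fst h)

lemma ker_ψm_eq_range_φm (hf0 : f ≠ 0) (ha0 : a ≠ 0) (g : k[X]) (hg : f = a * g) :
    LinearMap.ker (ψm f (τ (-1) a)) = LinearMap.range (φm f a hf0 ha0 g hg) := by
  apply le_antisymm
  · rintro ⟨u, v⟩ hp
    have hval : ψfull f (τ (-1) a) (u, v) = 0 := congrArg Subtype.val (LinearMap.mem_ker.mp hp)
    rw [ψfull_apply] at hval
    have heq : Yg f * u = ra f (τ (-1) a) * v := sub_eq_zero.mp hval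
    have hu : u ∈ Ia f a := by
      apply dvd_mem_Ia f hf0 a
      intro m hm
      have hco := congrArg (coords f hf0) heq
      rw [coords_Y_mul, coords_ra_mul] at hco
      have hcm := DFunLike.congr_fun hco (m - 1)
      rw [WLY_apply, WL_apply, if_pos (by omega : m - 1 + 1 ≤ 0), mul_one,
        show m - 1 + 1 = m by ring] at hcm
      have hca : τ (1:ℤ) (τ (-1) a) = a := by rw [τ_τ]; norm_num
      have h3 : coords f hf0 u m = a * τ 1 (coords f hf0 v (m-1)) := by
        have hh := congrArg (τ (1:ℤ)) hcm
        rw [τ_τ, show (1:ℤ) + -1 = 0 by norm_num, τ_zero, map_mul, hca] at hh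
        exact hh
      rw [h3]
      exact Dvd.intro _ rfl
    refine ⟨⟨u, hu⟩, ?_⟩
    have hv : Vof f a g hg ⟨u, hu⟩ = v := by
      apply ra_left_cancel f hf0 ((map_ne_zero_iff _ (τ (-1)).injective).mpr ha0)
      rw [Vof_spec]
      exact heq
    rw [φm, LinearMap.prod_apply]
    exact Prod.ext rfl hv
  · rintro q ⟨w, rfl⟩
    apply LinearMap.mem_ker.mpr
    apply Subtype.ext
    show ψfull f (τ (-1) a) (φm f a hf0 ha0 g hg w) = 0
    rw [φm, LinearMap.prod_apply, ψfull_apply]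
    show Yg f * (w : GWAk k f) - ra f (τ (-1) a) * (Vof f a g hg w) = 0
    rw [Vof_spec, sub_self]

/-- The retraction `ν`, before codomain restriction. -/
noncomputable def νfull (s t : k[X]) : GWAk k f × GWAk k f →ₗ[(GWAk k f)ᵐᵒᵖ] GWAk k f :=
  (lmul f (ra f (s * a))).comp (LinearMap.fst _ _ _)
    + (lmul f (Xg f * ra f (τ (-1) t))).comp (LinearMap.snd _ _ _)

lemma νfull_apply (s t : k[X]) (p : GWAk k f × GWAk k f) :
    νfull f a s t p = ra f (s * a) * p.1 + (Xg f * ra f (τ (-1) t)) * p.2 := rfl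

lemma νfull_mem (s t : k[X]) (p : GWAk k f × GWAk k f) : νfull f a s t p ∈ Ia f a := by
  rw [νfull_apply]
  apply add_mem
  · rw [mul_comm s a, ra_mul, mul_assoc,
      show ra f a * (ra f s * p.1) = (op (ra f s * p.1) : (GWAk k f)ᵐᵒᵖ) • ra f a from rfl]
    exact Submodule.smul_mem _ _ (Submodule.subset_span (by left; rfl))
  · rw [mul_assoc,
      show Xg f * (ra f (τ (-1) t) * p.2) = (op (ra f (τ (-1) t) * p.2) : (GWAk k f)ᵐᵒᵖ) • Xg f
        from rfl]
    exact Submodule.smul_mem _ _ (Submodule.subset_span (by right; rfl))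

/-- The retraction `ν`. -/
noncomputable def νm (s t : k[X]) : GWAk k f × GWAk k f →ₗ[(GWAk k f)ᵐᵒᵖ] Ia f a :=
  (νfull f a s t).codRestrict (Ia f a) (νfull_mem f a s t)

lemma νm_comp_φm (hf0 : f ≠ 0) (ha0 : a ≠ 0) (g : k[X]) (hg : f = a * g)
    (s t : k[X]) (hst : s * a + t * g = 1) :
    (νm f a s t).comp (φm f a hf0 ha0 g hg) = LinearMap.id := by
  apply LinearMap.ext
  intro w
  apply Subtype.ext
  show νfull f a s t (φm f a hf0 ha0 g hg w) = (w : GWAk k f)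
  rw [φm, LinearMap.prod_apply, νfull_apply]
  show ra f (s * a) * (w : GWAk k f) + (Xg f * ra f (τ (-1) t)) * (Vof f a g hg w)
      = (w : GWAk k f)
  have key : ra f a * ((Xg f * ra f (τ (-1) t)) * Vof f a g hg w)
      = ra f a * (ra f (t * g) * (w : GWAk k f)) := by
    have hXb : ra f a * Xg f = Xg f * ra f (τ (-1) a) := by
      rw [Xg_mul_ra, τ_τ]
      norm_num
    have hcomm : ra f (τ (-1) a) * ra f (τ (-1) t) = ra f (τ (-1) t) * ra f (τ (-1) a) := by
      rw [← ra_mul, ← ra_mul, mul_comm]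
    have hXt : Xg f * ra f (τ (-1) t) = ra f t * Xg f := by
      rw [Xg_mul_ra, τ_τ]
      norm_num
    calc ra f a * ((Xg f * ra f (τ (-1) t)) * Vof f a g hg w)
        = (ra f a * Xg f) * (ra f (τ (-1) t) * Vof f a g hg w) := by
          simp only [mul_assoc]
      _ = Xg f * (ra f (τ (-1) a) * ra f (τ (-1) t)) * Vof f a g hg w := by
          rw [hXb]; simp only [mul_assoc]
      _ = (Xg f * ra f (τ (-1) t)) * (ra f (τ (-1) a) * Vof f a g hg w) := by
          rw [hcomm]; simp only [mul_assoc]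
      _ = (Xg f * ra f (τ (-1) t)) * (Yg f * (w : GWAk k f)) := by rw [Vof_spec]
      _ = (ra f t * (Xg f * Yg f)) * (w : GWAk k f) := by
          conv_lhs => rw [← mul_assoc, hXt]
          simp only [mul_assoc]
      _ = ra f (t * f) * (w : GWAk k f) := by rw [Xg_mul_Yg, ← ra_mul]
      _ = ra f a * (ra f (t * g) * (w : GWAk k f)) := by
          rw [← mul_assoc, ← ra_mul]
          congr 2
          rw [hg]; ring
  have h2 := ra_left_cancel f hf0 ha0 key
  rw [h2, ← add_mul, ← ra_add, hst, ra_one, one_mul]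

lemma proj_Ia (hf0 : f ≠ 0) (ha0 : a ≠ 0) (g : k[X]) (hg : f = a * g)
    (s t : k[X]) (hst : s * a + t * g = 1) :
    Module.Projective ((GWAk k f)ᵐᵒᵖ) (Ia f a) := by
  haveI := projective_AA f
  exact Module.Projective.of_split (φm f a hf0 ha0 g hg) (νm f a s t)
    (νm_comp_φm f a hf0 ha0 g hg s t hst)

lemma not_proj_quot (hf0 : f ≠ 0) (ha0 : a ≠ 0) (haf : a ∣ f) (hnu : ¬ IsUnit a) :
    ¬ Module.Projective ((GWAk k f)ᵐᵒᵖ) (GWAk k f ⧸ Ia f a) := by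
  intro hP
  obtain ⟨h, hh⟩ := Module.projective_lifting_property (Ia f a).mkQ LinearMap.id
    (Submodule.mkQ_surjective _)
  set π : GWAk k f →ₗ[(GWAk k f)ᵐᵒᵖ] GWAk k f := LinearMap.id - h.comp (Ia f a).mkQ with hπ
  have hπmem : ∀ x, π x ∈ Ia f a := by
    intro x
    rw [← Submodule.Quotient.mk_eq_zero]
    have hq : (Ia f a).mkQ (π x) = 0 := by
      rw [hπ]
      simp only [LinearMap.sub_apply, LinearMap.id_apply, LinearMap.coe_comp,
        Function.comp_apply, map_sub]
      rw [← LinearMap.comp_apply ((Ia f a).mkQ) h, hh, LinearMap.id_apply, sub_self]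
    rwa [Submodule.mkQ_apply] at hq
  have hπid : ∀ w ∈ Ia f a, π w = w := by
    intro w hw
    rw [hπ]
    simp only [LinearMap.sub_apply, LinearMap.id_apply, LinearMap.coe_comp,
      Function.comp_apply]
    rw [Submodule.mkQ_apply, (Submodule.Quotient.mk_eq_zero _).mpr hw, map_zero, sub_zero]
  have hπmul : ∀ x : GWAk k f, π x = π 1 * x := by
    intro x
    have hs := π.map_smul (op x) 1
    rw [smul_gwa, smul_gwa, one_mul, unop_op] at hs
    exact hs
  have h1 : π 1 * ra f a = ra f a := by
    rw [← hπmul]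
    exact hπid _ (Submodule.subset_span (by left; rfl))
  have h2 : (π 1 - 1) * ra f a = 0 := by rw [sub_mul, h1, one_mul, sub_self]
  have h3 : π 1 = 1 := sub_eq_zero.mp (ra_right_cancel0 f hf0 ha0 h2)
  have h4 : (1 : GWAk k f) ∈ Ia f a := h3 ▸ hπmem 1
  have h5 := mem_Ia_dvd f hf0 a haf h4 0 le_rfl
  rw [coords_one, Finsupp.single_eq_same] at h5
  exact hnu (isUnit_of_dvd_one h5)

end GWAaux
open GWAaux

/-- For a simple GWA `A = R(σ,f)` and a root `α` of `f` of multiplicity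
`n_α` there is a short exact sequence of (graded) right `A`-modules
`0 → (z−α)^{n_α}A + xA → A ⊕ A⟨−1⟩ → [σ⁻¹((z−α)^{n_α})A + yA]⟨−1⟩ → 0`, and this
sequence splits; hence `M_α^{−n_α} = A/((z−α)^{n_α}A + xA)` has projective dimension 1,
i.e. its first syzygy is projective while `M_α^{−n_α}` itself is not projective. -/
theorem Mminus_projective_dimension_one
    (k : Type) [Field k] [IsAlgClosed k] [CharZero k]
    (f : k[X]) (hf : f.Monic)
    (hsimple : ∀ β γ : k, f.IsRoot β → f.IsRoot γ → (∃ t : ℤ, β = γ + t) → β = γ)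
    (α : k) (hα : f.IsRoot α) :
    (∃ (φ : ↥(rightIdealM k f α (f.rootMultiplicity α))
          →ₗ[(GWAk k f)ᵐᵒᵖ] GWAk k f × GWAk k f)
        (ψ : GWAk k f × GWAk k f
          →ₗ[(GWAk k f)ᵐᵒᵖ] ↥(rightIdealK k f α (f.rootMultiplicity α))),
        Function.Injective φ ∧ Function.Surjective ψ ∧
          LinearMap.ker ψ = LinearMap.range φ ∧
            ∃ ν : GWAk k f × GWAk k f
                →ₗ[(GWAk k f)ᵐᵒᵖ] ↥(rightIdealM k f α (f.rootMultiplicity α)),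
              ν.comp φ = LinearMap.id) ∧
      Module.Projective (GWAk k f)ᵐᵒᵖ ↥(rightIdealM k f α (f.rootMultiplicity α)) ∧
        ¬ Module.Projective (GWAk k f)ᵐᵒᵖ (Mminus k f α (f.rootMultiplicity α)) := by
  classical
  have hf0 : f ≠ 0 := hf.ne_zero
  have ha0 : ((X - C α) ^ (f.rootMultiplicity α) : k[X]) ≠ 0 :=
    pow_ne_zero _ (X_sub_C_ne_zero α)
  obtain ⟨g, hg, hgnd⟩ := f.exists_eq_pow_rootMultiplicity_mul_and_not_dvd hf0 α
  have hcop : IsCoprime ((X - C α) ^ (f.rootMultiplicity α)) g :=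
    ((prime_X_sub_C α).coprime_iff_not_dvd.mpr hgnd).pow_left
  obtain ⟨s, t, hst⟩ := hcop
  have haf : ((X - C α) ^ (f.rootMultiplicity α) : k[X]) ∣ f := Dvd.intro g hg.symm
  have hKeq : rightIdealK k f α (f.rootMultiplicity α)
      = Ka f (τ (-1) ((X - C α) ^ (f.rootMultiplicity α))) := by
    rw [rightIdealK, σ_symm_eq_τ]
    rfl
  rw [hKeq]
  have hnu : ¬ IsUnit ((X - C α) ^ (f.rootMultiplicity α) : k[X]) := by
    intro hu
    have hn0 : f.rootMultiplicity α ≠ 0 := by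
      have := (rootMultiplicity_pos hf0).mpr hα
      omega
    exact not_isUnit_X_sub_C α ((isUnit_pow_iff hn0).mp hu)
  refine ⟨⟨φm f _ hf0 ha0 g hg, ψm f _,
      φm_injective f _ hf0 ha0 g hg, ψm_surjective f _,
      ker_ψm_eq_range_φm f _ hf0 ha0 g hg,
      ⟨νm f _ s t, νm_comp_φm f _ hf0 ha0 g hg s t hst⟩⟩,
    proj_Ia f _ hf0 ha0 g hg s t hst,
    not_proj_quot f _ hf0 ha0 haf hnu⟩
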